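/- Let k ≤ 0, λ > 0, and let u : [0,∞) → ℝ be a C² function with u(0) = 0 satisfying −u''(x) + (x−k)² u(x) = λ u(x) for all x ≥ 0, with u, u' ∈ L²(0,∞) and ∫₀^∞ u(x)² dx = 1. Let x₀ > 0 be such that λ ≤ (x₀ − k)². Then for every x ≥ x₀ one has |u(x)| ≤ 2^{1/2} λ^{1/4} exp( − ∫_{x₀}^x ((t−k)² − λ)^{1/2} dt ). -/

import Mathlib

open MeasureTheory Filter Set intervalIntegral

lemma my_mono {f f' : ℝ → ℝ} {a : ℝ}
    (hd : ∀ x, a ≤ x → HasDerivAt f (f' x) x)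
    (h0 : ∀ x, a < x → 0 ≤ f' x) : MonotoneOn f (Ici a) := by
  apply monotoneOn_of_deriv_nonneg (convex_Ici a)
  · exact fun x hx => (hd x hx).continuousAt.continuousWithinAt
  · intro x hx; rw [interior_Ici] at hx
    exact (hd x hx.le).differentiableAt.differentiableWithinAt
  · intro x hx; rw [interior_Ici] at hx; rw [(hd x hx.le).deriv]; exact h0 x hx

lemma my_anti {f f' : ℝ → ℝ} {a : ℝ}
    (hd : ∀ x, a ≤ x → HasDerivAt f (f' x) x)
    (h0 : ∀ x, a < x → f' x ≤ 0) : AntitoneOn f (Ici a) := by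
  apply antitoneOn_of_deriv_nonpos (convex_Ici a)
  · exact fun x hx => (hd x hx).continuousAt.continuousWithinAt
  · intro x hx; rw [interior_Ici] at hx
    exact (hd x hx.le).differentiableAt.differentiableWithinAt
  · intro x hx; rw [interior_Ici] at hx; rw [(hd x hx.le).deriv]; exact h0 x hx

set_option maxHeartbeats 1600000 in
theorem eigenfunction_agmon_decay (k lam : ℝ) (hk : k ≤ 0) (hlam : 0 < lam)
    (u v w : ℝ → ℝ)
    (hu : ∀ x ∈ Set.Ici (0:ℝ), HasDerivWithinAt u (v x) (Set.Ici 0) x)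
    (hv : ∀ x ∈ Set.Ici (0:ℝ), HasDerivWithinAt v (w x) (Set.Ici 0) x)
    (hw : ContinuousOn w (Set.Ici 0))
    (hu0 : u 0 = 0)
    (hode : ∀ x ≥ (0:ℝ), -w x + (x - k) ^ 2 * u x = lam * u x)
    (hL2u : MeasureTheory.IntegrableOn (fun x => (u x) ^ 2) (Set.Ioi 0))
    (hL2v : MeasureTheory.IntegrableOn (fun x => (v x) ^ 2) (Set.Ioi 0))
    (hnorm : ∫ x in Set.Ioi (0:ℝ), (u x) ^ 2 = 1)
    (x₀ : ℝ) (hx₀ : 0 < x₀) (hx₀lam : lam ≤ (x₀ - k) ^ 2) :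
    ∀ x ≥ x₀, |u x| ≤ Real.sqrt 2 * lam ^ ((1:ℝ)/4)
      * Real.exp (-∫ t in x₀..x, Real.sqrt ((t - k) ^ 2 - lam)) := by
  -- basic derivative facts
  have hu' : ∀ x, 0 < x → HasDerivAt u (v x) x := fun x hx =>
    (hu x hx.le).hasDerivAt (Ici_mem_nhds hx)
  have hv' : ∀ x, 0 < x → HasDerivAt v (w x) x := fun x hx =>
    (hv x hx.le).hasDerivAt (Ici_mem_nhds hx)
  have hcu : ContinuousOn u (Ici 0) := fun x hx => (hu x hx).continuousWithinAt
  have hcv : ContinuousOn v (Ici 0) := fun x hx => (hv x hx).continuousWithinAt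
  have hwq : ∀ x, 0 ≤ x → w x = ((x - k) ^ 2 - lam) * u x := by
    intro x hx; have := hode x hx; ring_nf; ring_nf at this; linarith
  have hq0 : ∀ t, x₀ ≤ t → 0 ≤ (t - k) ^ 2 - lam := by
    intro t ht; nlinarith [hx₀.le, hk]
  -- Step A
  have hA : ∀ x, x₀ ≤ x → u x * v x ≤ 0 := by
    intro x₁ hx₁
    by_contra hpos
    push_neg at hpos
    set ε := u x₁ * v x₁ with hε
    have hx₁0 : 0 < x₁ := lt_of_lt_of_le hx₀ hx₁
    have hNd : ∀ x, x₁ ≤ x → HasDerivAt (fun t => u t * v t) (v x * v x + u x * w x) x :=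
      fun x hx => (hu' x (lt_of_lt_of_le hx₁0 hx)).mul (hv' x (lt_of_lt_of_le hx₁0 hx))
    have hNmono : MonotoneOn (fun t => u t * v t) (Ici x₁) := by
      apply my_mono hNd
      intro x hx
      have hx0 : x₀ ≤ x := le_trans hx₁ hx.le
      have h1 : u x * w x = ((x - k) ^ 2 - lam) * u x ^ 2 := by
        rw [hwq x (le_trans hx₁0.le hx.le)]; ring
      nlinarith [hq0 x hx0, sq_nonneg (u x), mul_self_nonneg (v x)]
    have hNge : ∀ x, x₁ ≤ x → ε ≤ u x * v x := fun x hx =>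
      hNmono self_mem_Ici hx hx
    have hMd : ∀ x, x₁ ≤ x → HasDerivAt (fun t => u t * u t - 2 * ε * t)
        (v x * u x + u x * v x - 2 * ε * 1) x := fun x hx =>
      ((hu' x (lt_of_lt_of_le hx₁0 hx)).mul (hu' x (lt_of_lt_of_le hx₁0 hx))).sub
        ((hasDerivAt_id x).const_mul (2 * ε))
    have hMmono : MonotoneOn (fun t => u t * u t - 2 * ε * t) (Ici x₁) :=
      my_mono hMd (fun x hx => by nlinarith [hNge x hx.le])
    have hgrow : ∀ x, x₁ + 1 ≤ x → 2 * ε ≤ u x * u x := by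
      intro x hx
      have h2 := hMmono self_mem_Ici (show x ∈ Ici x₁ by simp only [mem_Ici]; linarith)
        (by linarith)
      simp only at h2
      nlinarith [mul_self_nonneg (u x₁)]
    have hεpos : 0 < ε := hpos
    have hab : x₁ + 1 ≤ x₁ + 1 + 1 / ε := by
      have := one_div_pos.mpr hεpos; linarith
    have hsub : Ioc (x₁ + 1) (x₁ + 1 + 1 / ε) ⊆ Ioi (0:ℝ) := by
      intro t ht; exact lt_trans (by linarith) ht.1
    have hint : IntervalIntegrable (fun t => u t ^ 2) volume (x₁ + 1) (x₁ + 1 + 1 / ε) := by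
      rw [intervalIntegrable_iff_integrableOn_Ioc_of_le hab]
      exact hL2u.mono_set hsub
    have h1 : ∫ t in (x₁ + 1)..(x₁ + 1 + 1 / ε), (2 * ε : ℝ) ≤
        ∫ t in (x₁ + 1)..(x₁ + 1 + 1 / ε), u t ^ 2 := by
      apply intervalIntegral.integral_mono_on hab intervalIntegrable_const hint
      intro t ht; have := hgrow t ht.1; nlinarith
    have h2 : ∫ t in (x₁ + 1)..(x₁ + 1 + 1 / ε), u t ^ 2 ≤ 1 := by
      rw [intervalIntegral.integral_of_le hab]
      refine le_trans (setIntegral_mono_set hL2u ?_ (HasSubset.Subset.eventuallyLE hsub))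
        (le_of_eq hnorm)
      filter_upwards with t using sq_nonneg _
    rw [intervalIntegral.integral_const, smul_eq_mul] at h1
    have : (x₁ + 1 + 1 / ε - (x₁ + 1)) * (2 * ε) = 2 := by field_simp; ring
    linarith
  -- Step B
  have hB : ∀ x, x₀ ≤ x → ((x - k) ^ 2 - lam) * u x ^ 2 ≤ v x ^ 2 := by
    intro x₁ hx₁
    by_contra hneg
    push_neg at hneg
    set ε := ((x₁ - k) ^ 2 - lam) * u x₁ ^ 2 - v x₁ ^ 2 with hε
    have hεpos : 0 < ε := by simp only [hε]; linarith
    have hx₁0 : 0 < x₁ := lt_of_lt_of_le hx₀ hx₁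
    have hEd : ∀ x, x₁ ≤ x → HasDerivAt
        (fun t => v t * v t - ((t - k) ^ 2 - lam) * (u t * u t))
        (2 * (v x * w x) - 2 * (x - k) * (u x * u x)
          - ((x - k) ^ 2 - lam) * (2 * (u x * v x))) x := by
      intro x hx
      have hx0 : 0 < x := lt_of_lt_of_le hx₁0 hx
      have h := ((hv' x hx0).mul (hv' x hx0)).sub
        (((((hasDerivAt_id x).sub_const k).pow 2).sub_const lam).mul
          ((hu' x hx0).mul (hu' x hx0)))
      refine h.congr_deriv ?_
      simp only [id_eq, Pi.mul_apply, Pi.pow_apply]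
      push_cast
      ring
    have hEanti : AntitoneOn (fun t => v t * v t - ((t - k) ^ 2 - lam) * (u t * u t))
        (Ici x₁) := by
      apply my_anti hEd
      intro x hx
      have hx0 : (0:ℝ) ≤ x := le_trans hx₁0.le hx.le
      have h1 : w x = ((x - k) ^ 2 - lam) * u x := hwq x hx0
      have h2 : 2 * (v x * w x) - 2 * (x - k) * (u x * u x)
          - ((x - k) ^ 2 - lam) * (2 * (u x * v x)) = -2 * (x - k) * (u x * u x) := by
        rw [h1]; ring
      rw [h2]
      have hxk : 0 < x - k := by linarith [lt_trans hx₀ (lt_of_le_of_lt hx₁ hx)]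
      nlinarith [mul_self_nonneg (u x)]
    have hEle : ∀ x, x₁ ≤ x → v x * v x - ((x - k) ^ 2 - lam) * (u x * u x) ≤ -ε := by
      intro x hx
      have := hEanti self_mem_Ici hx hx
      simp only at this
      nlinarith [this]
    have hFd : ∀ x, x₁ ≤ x → HasDerivAt (fun t => -(u t * v t) + ε * t)
        (-(v x * v x + u x * w x) + ε * 1) x := by
      intro x hx
      have hx0 : 0 < x := lt_of_lt_of_le hx₁0 hx
      exact (((hu' x hx0).mul (hv' x hx0)).neg).add ((hasDerivAt_id x).const_mul ε)
    have hFanti : AntitoneOn (fun t => -(u t * v t) + ε * t) (Ici x₁) := by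
      apply my_anti hFd
      intro x hx
      have hx0 : (0:ℝ) ≤ x := le_trans hx₁0.le hx.le
      have h1 : u x * w x = ((x - k) ^ 2 - lam) * (u x * u x) := by
        rw [hwq x hx0]; ring
      have h2 := hEle x hx.le
      nlinarith [mul_self_nonneg (v x)]
    have hAx₁ : u x₁ * v x₁ ≤ 0 := hA x₁ hx₁
    obtain ⟨X, hX⟩ : ∃ X, X = x₁ + (-(u x₁ * v x₁) + 1) / ε := ⟨_, rfl⟩
    have hXge : x₁ ≤ X := by
      have : 0 < (-(u x₁ * v x₁) + 1) / ε := div_pos (by linarith) hεpos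
      rw [hX]; linarith
    have hF := hFanti self_mem_Ici (show X ∈ Ici x₁ from hXge) hXge
    simp only at hF
    have hAX : u X * v X ≤ 0 := hA X (le_trans hx₁ hXge)
    have hXval : ε * X = ε * x₁ + (-(u x₁ * v x₁) + 1) := by
      rw [hX]; field_simp
    nlinarith [hF, hAX, hXval]
  -- Step C
  have hsqc : Continuous fun t : ℝ => Real.sqrt ((t - k) ^ 2 - lam) :=
    (((continuous_id.sub continuous_const).pow 2).sub continuous_const).sqrt
  have hAd : ∀ x : ℝ, HasDerivAt (fun y => ∫ t in x₀..y, Real.sqrt ((t - k) ^ 2 - lam))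
      (Real.sqrt ((x - k) ^ 2 - lam)) x := by
    intro x
    exact intervalIntegral.integral_hasDerivAt_right (hsqc.intervalIntegrable _ _)
      (hsqc.stronglyMeasurableAtFilter _ _) hsqc.continuousAt
  have hC : ∀ x, x₀ ≤ x → u x ^ 2 ≤ u x₀ ^ 2 *
      Real.exp (-(2 * ∫ t in x₀..x, Real.sqrt ((t - k) ^ 2 - lam))) := by
    intro x hx
    have hgd : ∀ y, x₀ ≤ y → HasDerivAt
        (fun t => (u t * u t) * Real.exp (2 * ∫ s in x₀..t, Real.sqrt ((s - k) ^ 2 - lam)))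
        ((v y * u y + u y * v y) * Real.exp (2 * ∫ s in x₀..y, Real.sqrt ((s - k) ^ 2 - lam))
          + (u y * u y) * (Real.exp (2 * ∫ s in x₀..y, Real.sqrt ((s - k) ^ 2 - lam))
             * (2 * Real.sqrt ((y - k) ^ 2 - lam)))) y := by
      intro y hy
      have hy0 : 0 < y := lt_of_lt_of_le hx₀ hy
      exact ((hu' y hy0).mul (hu' y hy0)).mul (((hAd y).const_mul 2).exp)
    have hganti : AntitoneOn
        (fun t => (u t * u t) * Real.exp (2 * ∫ s in x₀..t, Real.sqrt ((s - k) ^ 2 - lam)))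
        (Ici x₀) := by
      apply my_anti hgd
      intro y hy
      have hy0 : x₀ ≤ y := hy.le
      -- key pointwise inequality
      have h1 : Real.sqrt ((y - k) ^ 2 - lam) * |u y| ≤ |v y| := by
        have h2 := Real.sqrt_le_sqrt (hB y hy0)
        rw [Real.sqrt_mul (hq0 y hy0), Real.sqrt_sq_eq_abs, Real.sqrt_sq_eq_abs] at h2
        exact h2
      have h3 : Real.sqrt ((y - k) ^ 2 - lam) * (u y * u y) ≤ |v y| * |u y| := by
        have h4 := mul_le_mul_of_nonneg_right h1 (abs_nonneg (u y))
        calc Real.sqrt ((y - k) ^ 2 - lam) * (u y * u y)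
            = Real.sqrt ((y - k) ^ 2 - lam) * |u y| * |u y| := by
              rw [mul_assoc, abs_mul_abs_self]
          _ ≤ |v y| * |u y| := h4
      have h5 : |v y| * |u y| = -(u y * v y) := by
        rw [← abs_mul, abs_of_nonpos (by rw [mul_comm]; exact hA y hy0)]
        ring
      have hexp : 0 < Real.exp (2 * ∫ s in x₀..y, Real.sqrt ((s - k) ^ 2 - lam)) :=
        Real.exp_pos _
      nlinarith [hexp]
    have hg := hganti self_mem_Ici (show x ∈ Ici x₀ from hx) hx
    simp only [intervalIntegral.integral_same, mul_zero, Real.exp_zero, mul_one] at hg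
    have hexp2 : 0 < Real.exp (2 * ∫ s in x₀..x, Real.sqrt ((s - k) ^ 2 - lam)) :=
      Real.exp_pos _
    rw [Real.exp_neg, ← div_eq_mul_inv, le_div_iff₀ hexp2]
    calc u x ^ 2 * Real.exp (2 * ∫ t in x₀..x, Real.sqrt ((t - k) ^ 2 - lam))
        = u x * u x * Real.exp (2 * ∫ s in x₀..x, Real.sqrt ((s - k) ^ 2 - lam)) := by ring
      _ ≤ u x₀ * u x₀ := hg
      _ = u x₀ ^ 2 := by ring
  have hD : u x₀ ^ 2 ≤ 2 * Real.sqrt lam := by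
    have hIcc : Icc (0:ℝ) x₀ ⊆ Ici 0 := Icc_subset_Ici_self
    have hcuI : ContinuousOn u (Icc 0 x₀) := hcu.mono hIcc
    have hcvI : ContinuousOn v (Icc 0 x₀) := hcv.mono hIcc
    have hcwI : ContinuousOn w (Icc 0 x₀) := hw.mono hIcc
    have huIcc : uIcc (0:ℝ) x₀ = Icc 0 x₀ := uIcc_of_le hx₀.le
    have hsl : (0:ℝ) < Real.sqrt lam := Real.sqrt_pos.mpr hlam
    have hsl2 : Real.sqrt lam ^ 2 = lam := Real.sq_sqrt hlam.le
    have hint1 : IntervalIntegrable (fun t => v t * u t + u t * v t) volume 0 x₀ := by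
      apply ContinuousOn.intervalIntegrable; rw [huIcc]
      exact (hcvI.mul hcuI).add (hcuI.mul hcvI)
    have hintwu : IntervalIntegrable (fun t => w t * u t) volume 0 x₀ := by
      apply ContinuousOn.intervalIntegrable; rw [huIcc]; exact hcwI.mul hcuI
    have hintvv : IntervalIntegrable (fun t => v t * v t) volume 0 x₀ := by
      apply ContinuousOn.intervalIntegrable; rw [huIcc]; exact hcvI.mul hcvI
    have hint2 : IntervalIntegrable (fun t => w t * u t + v t * v t) volume 0 x₀ :=
      hintwu.add hintvv
    have hintu2 : IntervalIntegrable (fun t => u t ^ 2) volume 0 x₀ := by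
      apply ContinuousOn.intervalIntegrable; rw [huIcc]; exact hcuI.pow 2
    have hintk : IntervalIntegrable (fun t => (t - k) ^ 2 * u t ^ 2) volume 0 x₀ := by
      apply ContinuousOn.intervalIntegrable; rw [huIcc]
      exact (((continuous_id.sub continuous_const).pow 2).continuousOn).mul (hcuI.pow 2)
    have hftc1 : ∫ t in (0:ℝ)..x₀, (v t * u t + u t * v t) = u x₀ * u x₀ - u 0 * u 0 := by
      apply integral_eq_sub_of_hasDeriv_right_of_le hx₀.le (hcuI.mul hcuI) _ hint1
      intro t ht
      exact ((hu' t ht.1).mul (hu' t ht.1)).hasDerivWithinAt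
    have hftc2 : ∫ t in (0:ℝ)..x₀, (w t * u t + v t * v t) = v x₀ * u x₀ - v 0 * u 0 := by
      apply integral_eq_sub_of_hasDeriv_right_of_le hx₀.le (hcvI.mul hcuI) _ hint2
      intro t ht
      exact ((hv' t ht.1).mul (hu' t ht.1)).hasDerivWithinAt
    rw [hu0, mul_zero, sub_zero] at hftc1 hftc2
    -- Iu bounds
    have hIu0 : 0 ≤ ∫ t in (0:ℝ)..x₀, u t ^ 2 :=
      intervalIntegral.integral_nonneg hx₀.le (fun t _ => sq_nonneg _)
    have hIu1 : ∫ t in (0:ℝ)..x₀, u t ^ 2 ≤ 1 := by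
      rw [intervalIntegral.integral_of_le hx₀.le]
      refine le_trans (setIntegral_mono_set hL2u ?_
        (HasSubset.Subset.eventuallyLE Ioc_subset_Ioi_self)) (le_of_eq hnorm)
      filter_upwards with t using sq_nonneg _
    -- Iv bound
    have hcong : ∫ t in (0:ℝ)..x₀, w t * u t
        = ∫ t in (0:ℝ)..x₀, ((t - k) ^ 2 * u t ^ 2 - lam * u t ^ 2) := by
      apply intervalIntegral.integral_congr
      intro t ht
      rw [huIcc] at ht
      show w t * u t = (t - k) ^ 2 * u t ^ 2 - lam * u t ^ 2
      rw [hwq t ht.1]; ring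
    have hsplit : ∫ t in (0:ℝ)..x₀, ((t - k) ^ 2 * u t ^ 2 - lam * u t ^ 2)
        = (∫ t in (0:ℝ)..x₀, (t - k) ^ 2 * u t ^ 2) - lam * ∫ t in (0:ℝ)..x₀, u t ^ 2 := by
      rw [intervalIntegral.integral_sub hintk (hintu2.const_mul lam),
        intervalIntegral.integral_const_mul]
    have hk2 : 0 ≤ ∫ t in (0:ℝ)..x₀, (t - k) ^ 2 * u t ^ 2 :=
      intervalIntegral.integral_nonneg hx₀.le (fun t _ => by positivity)
    have hsplit2 : ∫ t in (0:ℝ)..x₀, (w t * u t + v t * v t)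
        = (∫ t in (0:ℝ)..x₀, w t * u t) + ∫ t in (0:ℝ)..x₀, v t * v t :=
      intervalIntegral.integral_add hintwu hintvv
    have hvx₀ : v x₀ * u x₀ ≤ 0 := by
      have := hA x₀ le_rfl; linarith [this, mul_comm (v x₀) (u x₀)]
    have hIv : ∫ t in (0:ℝ)..x₀, v t * v t ≤ lam * ∫ t in (0:ℝ)..x₀, u t ^ 2 := by
      have := hftc2
      rw [hsplit2, hcong, hsplit] at this
      linarith
    have hIv0 : 0 ≤ ∫ t in (0:ℝ)..x₀, v t * v t :=
      intervalIntegral.integral_nonneg hx₀.le (fun t _ => mul_self_nonneg _)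
    -- pointwise Cauchy-Schwarz
    have hintRHS : IntervalIntegrable
        (fun t => Real.sqrt lam * u t ^ 2 + (1 / Real.sqrt lam) * (v t * v t))
        volume 0 x₀ := (hintu2.const_mul _).add (hintvv.const_mul _)
    have hmono : ∫ t in (0:ℝ)..x₀, (v t * u t + u t * v t)
        ≤ ∫ t in (0:ℝ)..x₀, (Real.sqrt lam * u t ^ 2 + (1 / Real.sqrt lam) * (v t * v t)) := by
      apply intervalIntegral.integral_mono_on hx₀.le hint1 hintRHS
      intro t _
      have hsq := sq_nonneg (Real.sqrt lam * u t - v t)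
      have h1 : 0 < Real.sqrt lam := hsl
      have hss : Real.sqrt lam * (1 / Real.sqrt lam) = 1 :=
        mul_one_div_cancel (ne_of_gt h1)
      nlinarith [hsq, hsl2, hss, h1, mul_pos h1 h1]
    have hRHSsplit : ∫ t in (0:ℝ)..x₀, (Real.sqrt lam * u t ^ 2 + (1 / Real.sqrt lam) * (v t * v t))
        = Real.sqrt lam * (∫ t in (0:ℝ)..x₀, u t ^ 2)
          + (1 / Real.sqrt lam) * ∫ t in (0:ℝ)..x₀, v t * v t := by
      rw [intervalIntegral.integral_add (hintu2.const_mul _) (hintvv.const_mul _),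
        intervalIntegral.integral_const_mul, intervalIntegral.integral_const_mul]
    have hfin : u x₀ * u x₀ ≤ Real.sqrt lam * 1 + (1 / Real.sqrt lam) * (lam * 1) := by
      rw [← hftc1]
      refine le_trans hmono ?_
      rw [hRHSsplit]
      have h2 : (1 / Real.sqrt lam) * (∫ t in (0:ℝ)..x₀, v t * v t)
          ≤ (1 / Real.sqrt lam) * (lam * ∫ t in (0:ℝ)..x₀, u t ^ 2) := by
        apply mul_le_mul_of_nonneg_left hIv (by positivity)
      have h3 : lam * (∫ t in (0:ℝ)..x₀, u t ^ 2) ≤ lam * 1 :=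
        mul_le_mul_of_nonneg_left hIu1 hlam.le
      have h4 : Real.sqrt lam * (∫ t in (0:ℝ)..x₀, u t ^ 2) ≤ Real.sqrt lam * 1 :=
        mul_le_mul_of_nonneg_left hIu1 hsl.le
      have h5 : (1 / Real.sqrt lam) * (lam * ∫ t in (0:ℝ)..x₀, u t ^ 2)
          ≤ (1 / Real.sqrt lam) * (lam * 1) :=
        mul_le_mul_of_nonneg_left h3 (by positivity)
      linarith
    have h6 : (1 / Real.sqrt lam) * (lam * 1) = Real.sqrt lam := by
      rw [mul_one, one_div, inv_mul_eq_div, div_eq_iff (ne_of_gt hsl)]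
      nlinarith [hsl2]
    nlinarith [hfin, h6]
  intro x hx
  have hCx := hC x hx
  set T := ∫ t in x₀..x, Real.sqrt ((t - k) ^ 2 - lam) with hT
  have hexpand : (Real.sqrt 2 * lam ^ ((1:ℝ)/4) * Real.exp (-T)) ^ 2
      = 2 * Real.sqrt lam * Real.exp (-(2 * T)) := by
    rw [mul_pow, mul_pow, Real.sq_sqrt (by norm_num : (0:ℝ) ≤ 2),
      ← Real.rpow_natCast (lam ^ ((1:ℝ)/4)) 2, ← Real.rpow_mul hlam.le,
      Real.sqrt_eq_rpow, sq, ← Real.exp_add]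
    norm_num
    ring_nf
    exact Or.inl trivial
  have hrhs : u x ^ 2 ≤ (Real.sqrt 2 * lam ^ ((1:ℝ)/4) * Real.exp (-T)) ^ 2 := by
    rw [hexpand]
    have hexp : 0 ≤ Real.exp (-(2 * T)) := (Real.exp_pos _).le
    calc u x ^ 2 ≤ u x₀ ^ 2 * Real.exp (-(2 * T)) := hCx
      _ ≤ 2 * Real.sqrt lam * Real.exp (-(2 * T)) :=
          mul_le_mul_of_nonneg_right hD hexp
  have hrhs0 : 0 ≤ Real.sqrt 2 * lam ^ ((1:ℝ)/4) * Real.exp (-T) := by positivity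
  calc |u x| = Real.sqrt (u x ^ 2) := (Real.sqrt_sq_eq_abs _).symm
    _ ≤ Real.sqrt ((Real.sqrt 2 * lam ^ ((1:ℝ)/4) * Real.exp (-T)) ^ 2) :=
        Real.sqrt_le_sqrt hrhs
    _ = Real.sqrt 2 * lam ^ ((1:ℝ)/4) * Real.exp (-T) := Real.sqrt_sq hrhs0
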